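/- Let H be a d×d Hermitian Hamiltonian with eigenvalues E_1 ≤ E_2 ≤ … ≤ E_d (listed in increasing order) and let ρ be a quantum state on the same d-dimensional Hilbert space with eigenvalues λ_1↓ ≥ λ_2↓ ≥ … ≥ λ_d↓ (listed in decreasing order). Then the passive energy satisfies min over unitaries U of Tr(H U ρ U†) = Σ_{i=1}^d E_i λ_i↓, i.e. the minimum is achieved by pairing the increasing eigenvalues of H with the decreasing eigenvalues of ρ. -/

import Mathlib

open Matrix ComplexOrder

/-- Passive energy of a state `σ` w.r.t. the Hamiltonian `H`:
the infimum over all unitaries `U` of `Tr (H U σ U†)`. -/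
noncomputable def Epass {d : ℕ} (H σ : Matrix (Fin d) (Fin d) ℂ) : ℝ :=
  ⨅ U : Matrix.unitaryGroup (Fin d) ℂ,
    ((H * ((U : Matrix (Fin d) (Fin d) ℂ) * σ * ((U : Matrix (Fin d) (Fin d) ℂ))ᴴ)).trace).re

/-- Coarse-grained state `ρ_cg^M = ∑ i, Tr(ρ M i) • M i / Tr(M i)`. -/
noncomputable def cgState {d n : ℕ} (ρ : Matrix (Fin d) (Fin d) ℂ)
    (M : Fin n → Matrix (Fin d) (Fin d) ℂ) : Matrix (Fin d) (Fin d) ℂ :=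
  ∑ i, (((ρ * M i).trace) / ((M i).trace)) • M i

/-- Observational ergotropy `R(ρ, M) = Tr(H ρ) - Epass(ρ_cg^M)`. -/
noncomputable def obsErg {d n : ℕ} (ρ H : Matrix (Fin d) (Fin d) ℂ)
    (M : Fin n → Matrix (Fin d) (Fin d) ℂ) : ℝ :=
  ((H * ρ).trace).re - Epass H (cgState ρ M)

/-- A fine-grained measurement: a family of rank-one mutually orthogonal
(Hermitian) projectors summing to the identity. -/
def FineGrained {d : ℕ} (P : Fin d → Matrix (Fin d) (Fin d) ℂ) : Prop :=
  (∀ i, (P i).IsHermitian) ∧ (∀ i j, P i * P j = if i = j then P i else 0) ∧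
    (∑ i, P i = 1) ∧ (∀ i, (P i).rank = 1)

/-- A column-stochastic matrix: nonnegative entries, every column sums to 1. -/
def ColStochastic {n d : ℕ} (D : Matrix (Fin n) (Fin d) ℝ) : Prop :=
  (∀ i j, 0 ≤ D i j) ∧ ∀ j, ∑ i, D i j = 1

/-- A doubly stochastic matrix: nonnegative entries, all row and column sums are 1. -/
def DoublyStochastic {d : ℕ} (B : Matrix (Fin d) (Fin d) ℝ) : Prop :=
  (∀ i j, 0 ≤ B i j) ∧ (∀ i, ∑ j, B i j = 1) ∧ (∀ j, ∑ i, B i j = 1)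

/-- The entries of `x` rearranged in non-increasing order. -/
noncomputable def descSort {d : ℕ} (x : Fin d → ℝ) : Fin d → ℝ :=
  fun i => x (Tuple.sort x i.rev)

/-- `Majorized x y` (`x ≺ y`): for every `k` the sum of the `k` largest entries
of `x` is at most that of `y`, with equal total sums. -/
def Majorized {d : ℕ} (x y : Fin d → ℝ) : Prop :=
  (∀ k : ℕ, (∑ i : Fin d, if (i : ℕ) < k then descSort x i else 0) ≤
      ∑ i : Fin d, if (i : ℕ) < k then descSort y i else 0) ∧
    (∑ i, x i = ∑ i, y i)

/-- The rank-one projector `|v⟩⟨v|`. -/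
noncomputable def projVec {d : ℕ} (v : Fin d → ℂ) : Matrix (Fin d) (Fin d) ℂ :=
  Matrix.vecMulVec v (star v)

/-- `v` is an orthonormal family: `⟨v i, v j⟩ = δ_{ij}`. -/
def IsONB {d : ℕ} (v : Fin d → (Fin d → ℂ)) : Prop :=
  ∀ i j, star (v i) ⬝ᵥ v j = if i = j then 1 else 0

/-- The dephasing `Δ_ρ = ∑ j ⟨E_j|ρ|E_j⟩ |E_j⟩⟨E_j|` of `ρ` in the basis `v`. -/
noncomputable def dephase {d : ℕ} (ρ : Matrix (Fin d) (Fin d) ℂ)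
    (v : Fin d → (Fin d → ℂ)) : Matrix (Fin d) (Fin d) ℂ :=
  ∑ j, (star (v j) ⬝ᵥ (ρ *ᵥ v j)) • projVec (v j)

/-- Incoherent ergotropy `R_incoherent(ρ) = Tr(H Δ_ρ) - Epass(Δ_ρ)`. -/
noncomputable def Rincoherent {d : ℕ} (ρ H : Matrix (Fin d) (Fin d) ℂ)
    (v : Fin d → (Fin d → ℂ)) : ℝ :=
  ((H * dephase ρ v).trace).re - Epass H (dephase ρ v)

/-! ### Auxiliary lemmas -/

section Aux

open Finset

lemma descSort_antitone {d : ℕ} (x : Fin d → ℝ) : Antitone (descSort x) :=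
  (Tuple.monotone_sort x).comp_antitone fun _ _ h => Fin.rev_le_rev.mpr h

lemma descSort_sum_comp {d : ℕ} (x : Fin d → ℝ) (h : ℝ → ℝ) :
    ∑ i, h (descSort x i) = ∑ i, h (x i) :=
  Equiv.sum_comp (Fin.revPerm.trans (Tuple.sort x)) (h ∘ x)

lemma sum_if_lt_const {d k : ℕ} (hk : k ≤ d) (t : ℝ) :
    ∑ i : Fin d, (if (i:ℕ) < k then t else 0) = k * t := by
  rw [Fin.sum_univ_eq_sum_range (fun j => if j < k then t else 0) d]
  rw [← Finset.sum_subset (Finset.range_subset_range.mpr hk)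
    (by intro x _ hx; simp_all)]
  simp [Finset.sum_ite_of_true]

lemma topk_bound {d : ℕ} (x c : Fin d → ℝ) (hc0 : ∀ l, 0 ≤ c l) (hc1 : ∀ l, c l ≤ 1)
    (k : ℕ) (hk : k ≤ d) (hsum : ∑ l, c l = k) :
    ∑ l, c l * x l ≤ ∑ i : Fin d, if (i:ℕ) < k then descSort x i else 0 := by
  rcases eq_or_lt_of_le hk with hkd | hkd
  · have hall : ∀ l, c l = 1 := by
      by_contra hne
      push_neg at hne
      obtain ⟨l0, hl0⟩ := hne
      have hlt : c l0 < 1 := lt_of_le_of_ne (hc1 l0) hl0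
      have : ∑ l, c l < ∑ l : Fin d, 1 :=
        Finset.sum_lt_sum (fun i _ => hc1 i) ⟨l0, Finset.mem_univ _, hlt⟩
      simp [hsum, hkd] at this
    have h1 : ∑ l, c l * x l = ∑ l, x l := by
      apply Finset.sum_congr rfl; intro l _; rw [hall l, one_mul]
    have h2 : ∀ i : Fin d, (i:ℕ) < k := fun i => hkd ▸ i.isLt
    rw [h1]
    rw [Finset.sum_congr rfl (fun i _ => if_pos (h2 i))]
    have h3 := descSort_sum_comp x id
    simp only [id] at h3
    rw [← h3]
  · set t := descSort x ⟨k, hkd⟩ with ht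
    have key : ∀ l, c l * x l ≤ max (x l - t) 0 + c l * t := by
      intro l
      rcases le_or_gt t (x l) with h | h
      · have : c l * x l ≤ (x l - t) + c l * t := by nlinarith [hc1 l, hc0 l]
        exact this.trans (by simp [le_max_left])
      · have hm : (0:ℝ) ≤ max (x l - t) 0 := le_max_right _ _
        nlinarith [mul_nonneg (hc0 l) (by linarith : (0:ℝ) ≤ t - x l)]
    calc ∑ l, c l * x l ≤ ∑ l, (max (x l - t) 0 + c l * t) :=
          Finset.sum_le_sum fun l _ => key l
      _ = ∑ l, max (x l - t) 0 + t * k := by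
          rw [Finset.sum_add_distrib, ← Finset.sum_mul, hsum]; ring
      _ = ∑ i : Fin d, max (descSort x i - t) 0 + t * k := by
          rw [descSort_sum_comp x (fun y => max (y - t) 0)]
      _ = ∑ i : Fin d, (if (i:ℕ) < k then descSort x i - t else 0) + t * k := by
          congr 1
          apply Finset.sum_congr rfl
          intro i _
          rcases lt_or_ge (i:ℕ) k with h | h
          · rw [if_pos h, max_eq_left]
            have : i ≤ (⟨k, hkd⟩ : Fin d) := Fin.le_def.mpr h.le
            linarith [descSort_antitone x this]
          · rw [if_neg (not_lt.mpr h), max_eq_right]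
            have : (⟨k, hkd⟩ : Fin d) ≤ i := Fin.le_def.mpr h
            linarith [descSort_antitone x this]
      _ = ∑ i : Fin d, (if (i:ℕ) < k then descSort x i else 0) := by
          have : ∑ i : Fin d, (if (i:ℕ) < k then descSort x i - t else 0)
              = ∑ i : Fin d, ((if (i:ℕ) < k then descSort x i else 0) - (if (i:ℕ) < k then t else 0)) := by
            apply Finset.sum_congr rfl; intro i _; split <;> simp
          rw [this, Finset.sum_sub_distrib, sum_if_lt_const hk t]
          ring

lemma range_if_eq {d k : ℕ} (hk : k ≤ d) (g : Fin d → ℝ) :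
    ∑ i ∈ Finset.range k, (if h : i < d then g ⟨i, h⟩ else 0)
      = ∑ j : Fin d, if (j:ℕ) < k then g j else 0 := by
  have h1 : ∑ j : Fin d, (if (j:ℕ) < k then g j else 0)
      = ∑ i ∈ Finset.range d, (if i < k then (if h : i < d then g ⟨i, h⟩ else 0) else 0) := by
    rw [← Fin.sum_univ_eq_sum_range]
    apply Finset.sum_congr rfl
    intro j _
    simp [j.isLt]
  rw [h1, ← Finset.sum_subset (Finset.range_subset_range.mpr hk) (by intro x _ hx; simp_all)]
  apply Finset.sum_congr rfl
  intro i hi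
  rw [if_pos (Finset.mem_range.mp hi)]

lemma abel_lb {d : ℕ} (E : Fin d → ℝ) (hE : Monotone E) (q s : Fin d → ℝ)
    (hpart : ∀ k : ℕ, k ≤ d → ∑ j : Fin d, (if (j:ℕ) < k then q j else 0)
        ≤ ∑ i : Fin d, (if (i:ℕ) < k then s i else 0))
    (htot : ∑ j, q j = ∑ j, s j) :
    ∑ i, E i * s i ≤ ∑ j, E j * q j := by
  rcases Nat.eq_zero_or_pos d with hd | hd
  · subst hd; simp
  set a : ℕ → ℝ := fun j => if h : j < d then q ⟨j, h⟩ - s ⟨j, h⟩ else 0 with ha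
  set f : ℕ → ℝ := fun j => if h : j < d then E ⟨j, h⟩ else 0 with hf
  have hG : ∀ k, k ≤ d → ∑ i ∈ Finset.range k, a i ≤ 0 := by
    intro k hk
    have : ∑ i ∈ Finset.range k, a i
        = (∑ j : Fin d, if (j:ℕ) < k then q j else 0)
          - (∑ j : Fin d, if (j:ℕ) < k then s j else 0) := by
      rw [← range_if_eq hk q, ← range_if_eq hk s, ← Finset.sum_sub_distrib]
      apply Finset.sum_congr rfl
      intro i hi
      have hid : i < d := lt_of_lt_of_le (Finset.mem_range.mp hi) hk
      simp [ha, hid]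
    rw [this]
    linarith [hpart k hk]
  have hGd : ∑ i ∈ Finset.range d, a i = 0 := by
    have : ∑ i ∈ Finset.range d, a i
        = (∑ j : Fin d, if (j:ℕ) < d then q j else 0)
          - (∑ j : Fin d, if (j:ℕ) < d then s j else 0) := by
      rw [← range_if_eq le_rfl q, ← range_if_eq le_rfl s, ← Finset.sum_sub_distrib]
      apply Finset.sum_congr rfl
      intro i hi
      simp [ha, Finset.mem_range.mp hi]
    rw [this]
    have e1 : ∑ j : Fin d, (if (j:ℕ) < d then q j else 0) = ∑ j, q j :=
      Finset.sum_congr rfl fun j _ => if_pos j.isLt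
    have e2 : ∑ j : Fin d, (if (j:ℕ) < d then s j else 0) = ∑ j, s j :=
      Finset.sum_congr rfl fun j _ => if_pos j.isLt
    rw [e1, e2, htot, sub_self]
  have habel := Finset.sum_range_by_parts f a d
  have hnn : 0 ≤ ∑ i ∈ Finset.range d, f i • a i := by
    rw [habel, hGd, smul_zero, zero_sub, neg_nonneg]
    apply Finset.sum_nonpos
    intro i hi
    have hi' : i < d - 1 := Finset.mem_range.mp hi
    have hi1 : i + 1 < d := by omega
    have hid : i < d := by omega
    have hmono : f i ≤ f (i + 1) := by
      simp only [hf, dif_pos hi1, dif_pos hid]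
      exact hE (by simp [Fin.le_def])
    have hGle : ∑ j ∈ Finset.range (i + 1), a j ≤ 0 := hG (i + 1) (by omega)
    simp only [smul_eq_mul]
    nlinarith
  have hfinal : ∑ i ∈ Finset.range d, f i • a i
      = (∑ j, E j * q j) - (∑ j, E j * s j) := by
    rw [← Finset.sum_sub_distrib, ← Fin.sum_univ_eq_sum_range (fun i => f i • a i)]
    apply Finset.sum_congr rfl
    intro j _
    simp [hf, ha, j.isLt, smul_eq_mul]
    ring
  linarith [hfinal ▸ hnn]

lemma trace_diag_formula {d : ℕ} (a b : Fin d → ℝ) (V : Matrix (Fin d) (Fin d) ℂ) :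
    ((Matrix.diagonal (fun j => (a j : ℂ)) * V * Matrix.diagonal (fun k => (b k : ℂ)) * Vᴴ).trace).re
      = ∑ j, ∑ k, a j * b k * Complex.normSq (V j k) := by
  have h : (Matrix.diagonal (fun j => (a j : ℂ)) * V * Matrix.diagonal (fun k => (b k : ℂ)) * Vᴴ).trace
      = ∑ j, ∑ k, ((a j * b k * Complex.normSq (V j k) : ℝ) : ℂ) := by
    have hDVD : ∀ j k, (Matrix.diagonal (fun j => (a j : ℂ)) * V * Matrix.diagonal (fun k => (b k : ℂ))) j k
        = (a j : ℂ) * V j k * (b k : ℂ) := fun j k => by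
      rw [Matrix.mul_diagonal, Matrix.diagonal_mul]
    rw [Matrix.trace]
    apply Finset.sum_congr rfl
    intro j _
    rw [Matrix.diag_apply, Matrix.mul_apply]
    apply Finset.sum_congr rfl
    intro k _
    rw [hDVD, Matrix.conjTranspose_apply]
    have hms : V j k * star (V j k) = ((Complex.normSq (V j k) : ℝ) : ℂ) := Complex.mul_conj _
    push_cast
    calc (a j : ℂ) * V j k * (b k : ℂ) * star (V j k)
        = (a j : ℂ) * (b k : ℂ) * (V j k * star (V j k)) := by ring
      _ = (a j : ℂ) * (b k : ℂ) * ((Complex.normSq (V j k) : ℝ) : ℂ) := by rw [hms]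
  rw [h]
  norm_cast

lemma unitary_row_sum {d : ℕ} (V : Matrix (Fin d) (Fin d) ℂ)
    (hV : V ∈ Matrix.unitaryGroup (Fin d) ℂ) (j : Fin d) :
    ∑ k, Complex.normSq (V j k) = 1 := by
  have h := Matrix.mem_unitaryGroup_iff.mp hV
  have h2 := congrArg (fun M => M j j) h
  simp only [Matrix.mul_apply, Matrix.one_apply_eq, Matrix.star_apply] at h2
  have h3 : ∑ k, ((Complex.normSq (V j k) : ℝ) : ℂ) = 1 := by
    rw [← h2]
    exact Finset.sum_congr rfl fun k _ => (Complex.mul_conj _).symm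
  have := congrArg Complex.re h3
  simpa using this

lemma unitary_col_sum {d : ℕ} (V : Matrix (Fin d) (Fin d) ℂ)
    (hV : V ∈ Matrix.unitaryGroup (Fin d) ℂ) (k : Fin d) :
    ∑ j, Complex.normSq (V j k) = 1 := by
  have h := Matrix.mem_unitaryGroup_iff'.mp hV
  have h2 := congrArg (fun M => M k k) h
  simp only [Matrix.mul_apply, Matrix.one_apply_eq, Matrix.star_apply] at h2
  have h3 : ∑ j, ((Complex.normSq (V j k) : ℝ) : ℂ) = 1 := by
    rw [← h2]
    refine Finset.sum_congr rfl fun j _ => ?_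
    rw [mul_comm]
    exact (Complex.mul_conj _).symm
  have := congrArg Complex.re h3
  simpa using this

lemma trace_reduce {d : ℕ} (V0 W V A B : Matrix (Fin d) (Fin d) ℂ)
    (hV0 : V0 ∈ Matrix.unitaryGroup (Fin d) ℂ) (hW : W ∈ Matrix.unitaryGroup (Fin d) ℂ) :
    ((V0 * A * V0ᴴ) * ((V0 * V * Wᴴ) * (W * B * Wᴴ) * (V0 * V * Wᴴ)ᴴ)).trace
      = (A * V * B * Vᴴ).trace := by
  have hV0' : V0ᴴ * V0 = 1 := by
    have := Matrix.mem_unitaryGroup_iff'.mp hV0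
    rwa [Matrix.star_eq_conjTranspose] at this
  have hW' : Wᴴ * W = 1 := by
    have := Matrix.mem_unitaryGroup_iff'.mp hW
    rwa [Matrix.star_eq_conjTranspose] at this
  have c1 : ∀ M : Matrix (Fin d) (Fin d) ℂ, V0ᴴ * (V0 * M) = M := fun M => by
    rw [← Matrix.mul_assoc, hV0', Matrix.one_mul]
  have c2 : ∀ M : Matrix (Fin d) (Fin d) ℂ, Wᴴ * (W * M) = M := fun M => by
    rw [← Matrix.mul_assoc, hW', Matrix.one_mul]
  have e1 : (V0 * A * V0ᴴ) * ((V0 * V * Wᴴ) * (W * B * Wᴴ) * (V0 * V * Wᴴ)ᴴ)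
      = V0 * (A * V * B * Vᴴ) * V0ᴴ := by
    simp only [Matrix.conjTranspose_mul, Matrix.conjTranspose_conjTranspose,
      Matrix.mul_assoc, c1, c2]
  rw [e1, Matrix.trace_mul_cycle, ← Matrix.mul_assoc, hV0', Matrix.one_mul]

lemma onb_unitary {d : ℕ} (v : Fin d → (Fin d → ℂ)) (hv : IsONB v) :
    (Matrix.of fun a j => v j a) ∈ Matrix.unitaryGroup (Fin d) ℂ := by
  rw [Matrix.mem_unitaryGroup_iff']
  ext i j
  simp only [Matrix.mul_apply, Matrix.star_apply, Matrix.of_apply, Matrix.one_apply]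
  have := hv i j
  simp only [dotProduct, Pi.star_apply] at this
  rw [← this]

lemma onb_decomp {d : ℕ} (v : Fin d → (Fin d → ℂ)) (E : Fin d → ℝ) :
    ∑ j, (E j : ℂ) • projVec (v j)
      = (Matrix.of fun a j => v j a) * Matrix.diagonal (fun j => (E j : ℂ))
          * (Matrix.of fun a j => v j a)ᴴ := by
  ext a b
  simp only [Matrix.sum_apply, Matrix.smul_apply, projVec, Matrix.vecMulVec_apply,
    Pi.star_apply, smul_eq_mul]
  rw [Matrix.mul_apply]
  apply Finset.sum_congr rfl
  intro j _
  simp only [Matrix.mul_diagonal, Matrix.conjTranspose_apply, Matrix.of_apply]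
  ring

lemma perm_unitary {d : ℕ} (σ : Equiv.Perm (Fin d)) :
    (Matrix.of fun j k => if σ j = k then (1:ℂ) else 0) ∈ Matrix.unitaryGroup (Fin d) ℂ := by
  rw [Matrix.mem_unitaryGroup_iff]
  ext j j'
  simp only [Matrix.mul_apply, Matrix.star_apply, Matrix.of_apply, Matrix.one_apply,
    apply_ite star, star_one, star_zero, ite_mul, one_mul, zero_mul]
  rw [Finset.sum_ite_eq Finset.univ (σ j) (fun k => if σ j' = k then (1:ℂ) else 0)]
  simp [Finset.mem_univ, EmbeddingLike.apply_eq_iff_eq, eq_comm]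

lemma lb_main {d : ℕ} (E : Fin d → ℝ) (hE : Monotone E) (lam : Fin d → ℝ)
    (V : Matrix (Fin d) (Fin d) ℂ) (hV : V ∈ Matrix.unitaryGroup (Fin d) ℂ) :
    ∑ i, E i * descSort lam i ≤ ∑ j, ∑ k, E j * lam k * Complex.normSq (V j k) := by
  set n : Fin d → Fin d → ℝ := fun j k => Complex.normSq (V j k) with hn
  set q : Fin d → ℝ := fun j => ∑ k, n j k * lam k with hq
  have hrw : ∀ j : Fin d, ∑ k, E j * lam k * Complex.normSq (V j k) = E j * q j := by
    intro j
    rw [hq, Finset.mul_sum]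
    exact Finset.sum_congr rfl fun k _ => by rw [hn]; ring
  rw [Finset.sum_congr rfl fun j _ => hrw j]
  apply abel_lb E hE q (descSort lam)
  · -- partial sums
    intro k hk
    set c : Fin d → ℝ := fun l => ∑ j : Fin d, (if (j:ℕ) < k then n j l else 0) with hc
    have swap : ∑ j : Fin d, (if (j:ℕ) < k then q j else 0) = ∑ l, c l * lam l := by
      have e1 : ∀ j : Fin d, (if (j:ℕ) < k then q j else 0)
          = ∑ l, (if (j:ℕ) < k then n j l * lam l else 0) := by
        intro j; split <;> simp [hq]
      rw [Finset.sum_congr rfl fun j _ => e1 j, Finset.sum_comm]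
      apply Finset.sum_congr rfl
      intro l _
      rw [hc, Finset.sum_mul]
      apply Finset.sum_congr rfl
      intro j _
      split <;> simp
    rw [swap]
    apply topk_bound lam c
    · intro l
      apply Finset.sum_nonneg
      intro j _
      split
      · exact Complex.normSq_nonneg _
      · exact le_rfl
    · intro l
      calc c l ≤ ∑ j, n j l := by
            apply Finset.sum_le_sum
            intro j _
            split
            · exact le_rfl
            · exact Complex.normSq_nonneg _
        _ = 1 := unitary_col_sum V hV l
    · exact hk
    · rw [hc, Finset.sum_comm]
      have : ∀ j : Fin d, ∑ l, (if (j:ℕ) < k then n j l else 0)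
          = (if (j:ℕ) < k then (1:ℝ) else 0) := by
        intro j
        split
        · exact unitary_row_sum V hV j
        · simp
      rw [Finset.sum_congr rfl fun j _ => this j, sum_if_lt_const hk 1, mul_one]
  · -- total sums
    have h1 : ∑ j, q j = ∑ l, lam l := by
      rw [hq, Finset.sum_comm]
      have : ∀ l : Fin d, ∑ j, n j l * lam l = lam l := by
        intro l
        rw [← Finset.sum_mul, unitary_col_sum V hV l, one_mul]
      exact Finset.sum_congr rfl fun l _ => this l
    have h2 := descSort_sum_comp lam id
    simp only [id] at h2
    rw [h1, ← h2]

end Aux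

/-- the minimum of `Tr(H U ρ U†)` over unitaries `U` is attained and
equals `∑ i, E i · λ↓ i`, pairing the increasing eigenvalues of `H` with the
decreasing eigenvalues of `ρ`. -/
theorem passive_energy_eq_sorted_pairing {d : ℕ} (H : Matrix (Fin d) (Fin d) ℂ)
    (E : Fin d → ℝ) (hE : Monotone E)
    (v : Fin d → (Fin d → ℂ)) (hv : IsONB v)
    (hH : H = ∑ j, (E j : ℂ) • projVec (v j))
    (ρ : Matrix (Fin d) (Fin d) ℂ) (hρ : ρ.PosSemidef) (hρtr : ρ.trace = 1) :
    IsLeast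
      {x : ℝ | ∃ U ∈ Matrix.unitaryGroup (Fin d) ℂ,
        x = ((H * (U * ρ * Uᴴ)).trace).re}
      (∑ i, E i * descSort hρ.1.eigenvalues i) := by
  classical
  set lam : Fin d → ℝ := hρ.1.eigenvalues with hlam
  set V0 : Matrix (Fin d) (Fin d) ℂ := Matrix.of fun a j => v j a with hV0def
  have hV0 : V0 ∈ Matrix.unitaryGroup (Fin d) ℂ := onb_unitary v hv
  set W : Matrix (Fin d) (Fin d) ℂ := (hρ.1.eigenvectorUnitary : Matrix (Fin d) (Fin d) ℂ)
    with hWdef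
  have hW : W ∈ Matrix.unitaryGroup (Fin d) ℂ := hρ.1.eigenvectorUnitary.2
  set DE : Matrix (Fin d) (Fin d) ℂ := Matrix.diagonal (fun j => (E j : ℂ)) with hDE
  set DL : Matrix (Fin d) (Fin d) ℂ := Matrix.diagonal (fun k => (lam k : ℂ)) with hDL
  have hHd : H = V0 * DE * V0ᴴ := by rw [hH, onb_decomp]
  have hρd : ρ = W * DL * Wᴴ := by
    have h := hρ.1.spectral_theorem
    rw [Unitary.conjStarAlgAut_apply] at h
    rw [← Matrix.star_eq_conjTranspose]
    exact h
  -- the main computation, valid for every unitary V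
  have key : ∀ V ∈ Matrix.unitaryGroup (Fin d) ℂ,
      ((H * ((V0 * V * Wᴴ) * ρ * (V0 * V * Wᴴ)ᴴ)).trace).re
        = ∑ j, ∑ k, E j * lam k * Complex.normSq (V j k) := by
    intro V _
    rw [hHd, hρd, trace_reduce V0 W V DE DL hV0 hW, hDE, hDL, trace_diag_formula]
  constructor
  · -- membership: take V the sorting permutation matrix
    set σ : Equiv.Perm (Fin d) := Fin.revPerm.trans (Tuple.sort lam) with hσ
    set P : Matrix (Fin d) (Fin d) ℂ := Matrix.of fun j k => if σ j = k then (1:ℂ) else 0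
      with hP
    have hPmem : P ∈ Matrix.unitaryGroup (Fin d) ℂ := perm_unitary σ
    refine ⟨V0 * P * Wᴴ, ?_, ?_⟩
    · exact mul_mem (mul_mem hV0 hPmem) (Unitary.star_mem hW)
    · rw [key P hPmem]
      symm
      apply Finset.sum_congr rfl
      intro j _
      have : ∀ k : Fin d, E j * lam k * Complex.normSq (P j k)
          = (if σ j = k then E j * lam k else 0) := by
        intro k
        rw [hP]
        simp only [Matrix.of_apply, apply_ite Complex.normSq, Complex.normSq_one,
          Complex.normSq_zero]
        split <;> simp
      rw [Finset.sum_congr rfl fun k _ => this k,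
        Finset.sum_ite_eq Finset.univ (σ j) (fun k => E j * lam k)]
      simp only [Finset.mem_univ, if_true]
      rfl
  · -- lower bound
    rintro x ⟨U, hU, rfl⟩
    set V : Matrix (Fin d) (Fin d) ℂ := V0ᴴ * U * W with hVdef
    have hVmem : V ∈ Matrix.unitaryGroup (Fin d) ℂ := by
      rw [hVdef, ← Matrix.star_eq_conjTranspose]
      exact mul_mem (mul_mem (Unitary.star_mem hV0) hU) hW
    have hUeq : U = V0 * V * Wᴴ := by
      have h1 : V0 * V0ᴴ = 1 := by
        have := Matrix.mem_unitaryGroup_iff.mp hV0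
        rwa [Matrix.star_eq_conjTranspose] at this
      have h2 : W * Wᴴ = 1 := by
        have := Matrix.mem_unitaryGroup_iff.mp hW
        rwa [Matrix.star_eq_conjTranspose] at this
      rw [hVdef]
      simp only [Matrix.mul_assoc]
      rw [h2, Matrix.mul_one, ← Matrix.mul_assoc, h1, Matrix.one_mul]
    rw [hUeq, key V hVmem]
    exact lb_main E hE lam V hVmem
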